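/- Let m = 2^t p with p an odd prime and t ≥ 1, and let a be a multiple of 2^{t−1}. If integers ℓ_j (for 1 ≤ j ≤ m−1, with ℓ_j = 0 whenever 2p | j) satisfy ∑_j ℓ_j (ζ^j + ζ^{−j}) = 0 for ζ = e^{iπ/m} and ∑_j ℓ_j = 0, then ∑_{j even} ℓ_j ≡ ℓ_{2p} ≡ 0 (mod 2). -/

import Mathlib

open Complex Real Polynomial Finset

theorem pgst_parity (p t : ℕ) (hp : p.Prime) (hodd : Odd p) (ht : 1 ≤ t)
    (m : ℕ) (hm : m = 2 ^ t * p) (a : ℕ) (ha : 2 ^ (t - 1) ∣ a)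
    (ζ : ℂ) (hζ : ζ = Complex.exp (Real.pi * Complex.I / m))
    (ℓ : ℕ → ℤ) (hℓ0 : ∀ j, 2 * p ∣ j → ℓ j = 0)
    (hzero : ∑ j ∈ Finset.Icc 1 (m - 1), (ℓ j : ℂ) * (ζ ^ (j : ℤ) + ζ ^ (-(j : ℤ))) = 0)
    (hsum : ∑ j ∈ Finset.Icc 1 (m - 1), ℓ j = 0) :
    (∑ j ∈ (Finset.Icc 1 (m - 1)).filter (fun j => Even j), ℓ j) % 2 = ℓ (2 * p) % 2 ∧
    ℓ (2 * p) % 2 = 0 := by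
  haveI : Fact (Nat.Prime 2) := ⟨Nat.prime_two⟩
  haveI := Fact.mk hp
  have hp3 : 3 ≤ p := by
    rcases hodd with ⟨k, hk⟩
    have := hp.two_le
    omega
  have hp2 : ¬ (2:ℕ) ∣ p := by rcases hodd with ⟨k, hk⟩; omega
  have h2t1 : (1:ℕ) ≤ 2^t := Nat.one_le_two_pow
  have h2tpos : 0 < 2^t := h2t1
  have h2tle : 2^t * 3 ≤ m := by rw [hm]; exact Nat.mul_le_mul_left _ hp3
  have hmm : 2^t * (p-1) + 2^t = m := by
    rw [hm, ← Nat.mul_succ]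
    congr 1
    omega
  have hm0 : m ≠ 0 := by omega
  have hmC : (m:ℂ) ≠ 0 := Nat.cast_ne_zero.2 hm0
  have hζ0 : ζ ≠ 0 := by rw [hζ]; exact Complex.exp_ne_zero _
  have h2m : 2 * m = 2^(t+1) * p := by rw [hm]; ring
  -- ζ is primitive 2m-th root of unity
  have hζprim : IsPrimitiveRoot ζ (2 * m) := by
    have h : ζ = Complex.exp (2 * Real.pi * Complex.I / ((2*m : ℕ) : ℂ)) := by
      rw [hζ]; congr 1; push_cast; field_simp
    rw [h]; exact Complex.isPrimitiveRoot_exp _ (by omega)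
  have hζm : ζ ^ m = -1 := by
    rw [hζ, ← Complex.exp_nat_mul]
    rw [show (m:ℂ) * (Real.pi * Complex.I / m) = Real.pi * Complex.I by field_simp]
    exact Complex.exp_pi_mul_I
  -- the difference polynomial
  set D : Polynomial ℤ := ∑ j ∈ Finset.Icc 1 (m-1), Polynomial.monomial j (ℓ j - ℓ (m - j))
    with hD
  have haev : Polynomial.aeval ζ D = 0 := by
    rw [hD, map_sum]
    have hstep : ∀ j ∈ Finset.Icc 1 (m-1),
        (Polynomial.aeval ζ) (Polynomial.monomial j (ℓ j - ℓ (m-j)))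
        = (ℓ j : ℂ) * ζ ^ j - (ℓ (m-j) : ℂ) * ζ ^ j := by
      intro j hj
      rw [Polynomial.aeval_monomial]
      simp only [algebraMap_int_eq, eq_intCast]
      push_cast
      ring
    rw [Finset.sum_congr rfl hstep, Finset.sum_sub_distrib]
    have hre : ∑ j ∈ Finset.Icc 1 (m-1), (ℓ (m-j) : ℂ) * ζ ^ j
        = ∑ j ∈ Finset.Icc 1 (m-1), (ℓ j : ℂ) * (- ζ ^ (-(j:ℤ))) := by
      refine Finset.sum_nbij' (fun j => m - j) (fun j => m - j) ?_ ?_ ?_ ?_ ?_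
      · intro j hj
        rw [Finset.mem_Icc] at hj ⊢
        omega
      · intro j hj
        rw [Finset.mem_Icc] at hj ⊢
        omega
      · intro j hj
        rw [Finset.mem_Icc] at hj
        omega
      · intro j hj
        rw [Finset.mem_Icc] at hj
        omega
      · intro j hj
        rw [Finset.mem_Icc] at hj
        have h3 : ζ ^ (-(((m - j : ℕ)) : ℤ)) = -(ζ ^ j) := by
          have h2 : (-((m - j : ℕ) : ℤ)) = (j:ℤ) + (-(m:ℤ)) := by omega
          rw [h2, zpow_add₀ hζ0, zpow_natCast, zpow_neg, zpow_natCast, hζm]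
          field_simp
        rw [h3, neg_neg]
    rw [hre]
    rw [← Finset.sum_sub_distrib]
    rw [← hzero]
    apply Finset.sum_congr rfl
    intro j hj
    rw [← zpow_natCast ζ j]
    ring
  -- divisibility by the cyclotomic polynomial
  have hpos2m : 0 < 2 * m := by omega
  have hdvd : Polynomial.cyclotomic (2*m) ℤ ∣ D := by
    rw [Polynomial.cyclotomic_eq_minpoly hζprim hpos2m]
    exact minpoly.isIntegrallyClosed_dvd (hζprim.isIntegral hpos2m) haev
  obtain ⟨Q, hQ⟩ := hdvd
  set Db : (ZMod 2)[X] := D.map (Int.castRingHom (ZMod 2)) with hDb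
  set Qb : (ZMod 2)[X] := Q.map (Int.castRingHom (ZMod 2)) with hQbdef
  have hQb : Db = Polynomial.cyclotomic (2*m) (ZMod 2) * Qb := by
    rw [hDb, hQ, Polynomial.map_mul, map_cyclotomic]
  -- explicit form of cyclotomic mod 2
  have hΦ : Polynomial.cyclotomic (2*m) (ZMod 2)
      = ∑ i ∈ Finset.range p, (Polynomial.X : (ZMod 2)[X]) ^ (2^t * i) := by
    rw [h2m, cyclotomic_mul_prime_pow_eq (ZMod 2) hp2 (Nat.succ_pos t), cyclotomic_prime]
    have he : 2^(t+1) - 2^(t+1-1) = 2^t := by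
      simp only [Nat.add_sub_cancel]
      rw [pow_succ]
      omega
    rw [he, sum_pow_char_pow]
    simp [← pow_mul, mul_comm]
  -- degrees
  have hmonic : (Polynomial.cyclotomic (2*m) (ZMod 2)).Monic := Polynomial.cyclotomic.monic _ _
  have hdegΦ : (Polynomial.cyclotomic (2*m) (ZMod 2)).natDegree = 2^t * (p-1) := by
    rw [Polynomial.natDegree_cyclotomic, h2m,
      Nat.totient_mul (Nat.Coprime.pow_left _ ((Nat.coprime_primes Nat.prime_two hp).2 (by omega))),
      Nat.totient_prime_pow Nat.prime_two (Nat.succ_pos t), Nat.totient_prime hp]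
    simp
  have hdegD : Db.natDegree ≤ m - 1 := by
    refine le_trans Polynomial.natDegree_map_le ?_
    apply Polynomial.natDegree_sum_le_of_forall_le
    intro j hj
    exact le_trans (Polynomial.natDegree_monomial_le _) (Finset.mem_Icc.1 hj).2
  have hQcoeff : ∀ r, 2^t ≤ r → Qb.coeff r = 0 := by
    intro r hr
    by_cases h0 : Qb = 0
    · simp [h0]
    apply Polynomial.coeff_eq_zero_of_natDegree_lt
    have hne : Polynomial.cyclotomic (2*m) (ZMod 2) ≠ 0 := hmonic.ne_zero
    have hmul := Polynomial.natDegree_mul hne h0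
    rw [← hQb, hdegΦ] at hmul
    omega
  -- coefficient extraction
  have hcoeff : ∀ i < p, ∀ r < 2^t, Db.coeff (2^t * i + r) = Qb.coeff r := by
    intro i hi r hr
    rw [hQb, hΦ, Finset.sum_mul]
    simp only [Polynomial.X_pow_mul, Polynomial.finset_sum_coeff, Polynomial.coeff_mul_X_pow']
    rw [Finset.sum_eq_single_of_mem i (Finset.mem_range.2 hi)]
    · rw [if_pos (by omega)]
      congr 1
      omega
    · intro i' hi' hne
      by_cases hle : 2^t * i' ≤ 2^t * i + r
      · rw [if_pos hle]
        apply hQcoeff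
        have hii : i' < i := by
          by_contra hc
          push_neg at hc
          have h1 : 2^t * (i+1) ≤ 2^t * i' := Nat.mul_le_mul_left _ (by omega)
          have h2 : 2^t * (i+1) = 2^t * i + 2^t := by ring
          omega
        have h1 : 2^t * (i'+1) ≤ 2^t * i := Nat.mul_le_mul_left _ (by omega)
        have h2 : 2^t * (i'+1) = 2^t * i' + 2^t := by ring
        omega
      · rw [if_neg hle]
  -- coefficients of Db
  have hDcoeff : ∀ k, Db.coeff k
      = if k ∈ Finset.Icc 1 (m-1) then ((ℓ k - ℓ (m - k) : ℤ) : ZMod 2) else 0 := by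
    intro k
    rw [hDb, Polynomial.coeff_map, hD, Polynomial.finset_sum_coeff]
    simp only [Polynomial.coeff_monomial]
    rw [Finset.sum_ite_eq' (Finset.Icc 1 (m-1)) k]
    split <;> simp
  have h2pm : 2 * p ∣ m := by
    obtain ⟨s, rfl⟩ : ∃ s, t = s + 1 := ⟨t-1, by omega⟩
    exact ⟨2^s, by rw [hm, pow_succ]; ring⟩
  have hQ0 : Qb.coeff 0 = 0 := by
    have h := hcoeff 0 (by omega) 0 h2tpos
    simp only [Nat.mul_zero, Nat.add_zero] at h
    rw [hDcoeff 0, if_neg (by simp)] at h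
    exact h.symm
  haveI : NeZero p := ⟨by omega⟩
  have hQeven : ∀ r < 2^t, Even r → Qb.coeff r = 0 := by
    intro r hr hre
    rcases Nat.eq_zero_or_pos r with rfl | hrpos
    · exact hQ0
    obtain ⟨s, hs⟩ := hre
    have hpne : ((2:ZMod p))^(t-1) ≠ 0 := by
      apply pow_ne_zero
      have hnd : ¬ (p ∣ 2) := by
        intro h
        have := Nat.le_of_dvd (by omega) h
        omega
      have : ((2:ℕ) : ZMod p) ≠ 0 := by
        rw [Ne, ZMod.natCast_eq_zero_iff]
        exact hnd
      simpa using this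
    set i0 : ZMod p := (-(s : ZMod p)) * ((2:ZMod p)^(t-1))⁻¹ with hi0
    set i := i0.val with hival
    have hilt : i < p := ZMod.val_lt i0
    have hpd : p ∣ 2^(t-1) * i + s := by
      have hzz : ((2^(t-1) * i + s : ℕ) : ZMod p) = 0 := by
        have hv : ((i : ℕ) : ZMod p) = i0 := by
          rw [hival, ZMod.natCast_val, ZMod.cast_id]
        push_cast
        rw [hv, hi0]
        have hc : (2:ZMod p)^(t-1) * (-(s:ZMod p) * ((2:ZMod p)^(t-1))⁻¹) = -(s:ZMod p) := by
          field_simp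
        rw [hc]
        ring
      exact (ZMod.natCast_eq_zero_iff _ _).1 hzz
    set jj := 2^t * i + r with hjj
    have hj1 : 1 ≤ jj := by omega
    have hjle : jj ≤ m - 1 := by
      have h1 : 2^t * i ≤ 2^t * (p-1) := Nat.mul_le_mul_left _ (by omega)
      omega
    have h2tt : 2^t = 2 * 2^(t-1) := by
      obtain ⟨u, rfl⟩ : ∃ u, t = u + 1 := ⟨t-1, by omega⟩
      rw [Nat.add_sub_cancel, pow_succ]
      ring
    have h2pj : 2 * p ∣ jj := by
      obtain ⟨c, hc⟩ := hpd
      refine ⟨c, ?_⟩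
      rw [hjj, h2tt, hs]
      calc 2 * 2^(t-1) * i + (s + s) = 2 * (2^(t-1) * i + s) := by ring
        _ = 2 * (p * c) := by rw [hc]
        _ = 2 * p * c := by ring
    have hDbz : Db.coeff jj = 0 := by
      rw [hDcoeff, if_pos (Finset.mem_Icc.2 ⟨hj1, hjle⟩),
        hℓ0 jj h2pj, hℓ0 (m - jj) (Nat.dvd_sub h2pm h2pj)]
      simp
    have hfin := hcoeff i hilt r hr
    rw [← hjj, hDbz] at hfin
    exact hfin.symm
  -- the symmetry ℓ j ≡ ℓ (m - j) mod 2 for even j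
  have hsymm : ∀ j ∈ Finset.Icc 1 (m-1), Even j →
      ((ℓ j : ZMod 2)) = ((ℓ (m - j) : ZMod 2)) := by
    intro j hj hje
    have hjm := Finset.mem_Icc.1 hj
    have hdiv : j / 2^t < p := by
      rw [Nat.div_lt_iff_lt_mul h2tpos]
      calc j ≤ m - 1 := hjm.2
        _ < m := by omega
        _ = p * 2^t := by rw [hm]; ring
    have hmod : j % 2^t < 2^t := Nat.mod_lt _ h2tpos
    have hmodeven : Even (j % 2^t) := by
      have h1 : j % 2^t % 2 = j % 2 := Nat.mod_mod_of_dvd j (dvd_pow_self 2 (by omega))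
      rcases hje with ⟨c, hc⟩
      rw [Nat.even_iff, h1]
      omega
    have h2 := hcoeff (j / 2^t) hdiv (j % 2^t) hmod
    rw [Nat.div_add_mod j (2^t), hDcoeff j, if_pos hj, hQeven _ hmod hmodeven] at h2
    push_cast at h2
    exact sub_eq_zero.1 h2
  have hl2p : ℓ (2*p) = 0 := hℓ0 _ dvd_rfl
  have hmeven : 2 ∣ m := by
    obtain ⟨s, rfl⟩ : ∃ s, t = s + 1 := ⟨t-1, by omega⟩
    exact ⟨2^s * p, by rw [hm, pow_succ]; ring⟩
  have hz : ((∑ j ∈ (Finset.Icc 1 (m-1)).filter (fun j => Even j), ℓ j : ℤ) : ZMod 2) = 0 := by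
    push_cast
    refine Finset.sum_involution (fun j _ => m - j) ?_ ?_ ?_ ?_
    · intro j hj
      rw [Finset.mem_filter] at hj
      rw [hsymm j hj.1 hj.2]
      exact CharTwo.add_self_eq_zero _
    · intro j hj hne
      rw [Finset.mem_filter, Finset.mem_Icc] at hj
      intro heq
      apply hne
      have h2j : 2 * j = m := by omega
      have hdvdj : 2*p ∣ j := by
        obtain ⟨s, rfl⟩ : ∃ s, t = s + 1 := ⟨t-1, by omega⟩
        have hmm2 : m = 2 * (2^s * p) := by rw [hm, pow_succ]; ring
        have hj2 : j = 2^s * p := by omega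
        rcases Nat.eq_zero_or_pos s with rfl | hs2
        · exfalso
          rcases hj.2 with ⟨c, hc⟩
          rcases hodd with ⟨k, hk⟩
          simp at hj2
          omega
        · obtain ⟨u, rfl⟩ : ∃ u, s = u + 1 := ⟨s-1, by omega⟩
          exact ⟨2^u, by rw [hj2, pow_succ]; ring⟩
      rw [hℓ0 j hdvdj]
      simp
    · intro j hj
      rw [Finset.mem_filter, Finset.mem_Icc] at hj
      rw [Finset.mem_filter, Finset.mem_Icc]
      refine ⟨⟨by omega, by omega⟩, ?_⟩
      rcases hj.2 with ⟨c, hc⟩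
      obtain ⟨d, hd⟩ := hmeven
      exact ⟨d - c, by omega⟩
    · intro j hj
      rw [Finset.mem_filter, Finset.mem_Icc] at hj
      omega
  rw [hl2p]
  rw [ZMod.intCast_zmod_eq_zero_iff_dvd] at hz
  constructor
  · omega
  · norm_num
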